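/- For every graph G = G(n,m) with n vertices and m edges, μ₁(G) − 2m/n ≥ s(G)²/(2n²√(2m)), where s(G) = Σ_{u∈V(G)} |d(u) − 2m/n|. -/

import Mathlib

open Matrix SimpleGraph

section AuxSpectral

lemma aux_key {n : ℕ} (U : Matrix (Fin n) (Fin n) ℝ) (h2 : Uᵀ * U = 1)
    (v w : Fin n → ℝ) : (U *ᵥ v) ⬝ᵥ (U *ᵥ w) = v ⬝ᵥ w := by
  rw [dotProduct_mulVec, ← vecMul_transpose, vecMul_vecMul, h2, vecMul_one]

lemma aux_decomp {n : ℕ} (U : Matrix (Fin n) (Fin n) ℝ) (μ : Fin n → ℝ)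
    (h1 : U * Uᵀ = 1) (h2 : Uᵀ * U = 1) (x : Fin n → ℝ) :
    ∃ y : Fin n → ℝ,
      x ⬝ᵥ x = ∑ i, y i ^ 2 ∧
      x ⬝ᵥ ((U * Matrix.diagonal μ * Uᵀ) *ᵥ x) = ∑ i, μ i * y i ^ 2 ∧
      ((U * Matrix.diagonal μ * Uᵀ) *ᵥ x) ⬝ᵥ ((U * Matrix.diagonal μ * Uᵀ) *ᵥ x)
        = ∑ i, μ i ^ 2 * y i ^ 2 := by
  refine ⟨Uᵀ *ᵥ x, ?_, ?_, ?_⟩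
  · have hx : x = U *ᵥ (Uᵀ *ᵥ x) := by rw [mulVec_mulVec, h1, one_mulVec]
    conv_lhs => rw [hx]
    rw [aux_key U h2]
    simp [dotProduct, sq]
  · have hAx : (U * Matrix.diagonal μ * Uᵀ) *ᵥ x
        = U *ᵥ (Matrix.diagonal μ *ᵥ (Uᵀ *ᵥ x)) := by
      simp [mulVec_mulVec, Matrix.mul_assoc]
    rw [hAx, dotProduct_mulVec, ← mulVec_transpose]
    simp [dotProduct, mulVec_diagonal]
    ring_nf
    exact Finset.sum_congr rfl fun i _ => by ring
  · have hAx : (U * Matrix.diagonal μ * Uᵀ) *ᵥ x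
        = U *ᵥ (Matrix.diagonal μ *ᵥ (Uᵀ *ᵥ x)) := by
      simp [mulVec_mulVec, Matrix.mul_assoc]
    rw [hAx, aux_key U h2]
    simp [dotProduct, mulVec_diagonal]
    exact Finset.sum_congr rfl fun i _ => by ring

lemma aux_spectral {n : ℕ} (A : Matrix (Fin n) (Fin n) ℝ) (hA : A.IsHermitian)
    (x : Fin n → ℝ) :
    ∃ y : Fin n → ℝ,
      x ⬝ᵥ x = ∑ i, y i ^ 2 ∧
      x ⬝ᵥ (A *ᵥ x) = ∑ i, hA.eigenvalues i * y i ^ 2 ∧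
      (A *ᵥ x) ⬝ᵥ (A *ᵥ x) = ∑ i, hA.eigenvalues i ^ 2 * y i ^ 2 := by
  set U : Matrix (Fin n) (Fin n) ℝ :=
    (Matrix.IsHermitian.eigenvectorUnitary hA : Matrix (Fin n) (Fin n) ℝ) with hU
  have hst : star U = Uᵀ := by
    rw [Matrix.star_eq_conjTranspose, Matrix.conjTranspose_eq_transpose_of_trivial]
  have h1 : U * Uᵀ = 1 := by
    rw [← hst]
    exact (Matrix.mem_unitaryGroup_iff).mp (Matrix.IsHermitian.eigenvectorUnitary hA).2
  have h2 : Uᵀ * U = 1 := by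
    rw [← hst]
    exact (Matrix.mem_unitaryGroup_iff').mp (Matrix.IsHermitian.eigenvectorUnitary hA).2
  have hAeq : A = U * Matrix.diagonal hA.eigenvalues * Uᵀ := by
    rw [← hst]
    have := hA.spectral_theorem
    simpa using this
  obtain ⟨y, hy1, hy2, hy3⟩ := aux_decomp U hA.eigenvalues h1 h2 x
  rw [← hAeq] at hy2 hy3
  exact ⟨y, hy1, hy2, hy3⟩

lemma aux_rayleigh {n : ℕ} (A : Matrix (Fin n) (Fin n) ℝ) (hA : A.IsHermitian)
    (μ : ℝ) (hmax : ∀ i, hA.eigenvalues i ≤ μ) (x : Fin n → ℝ) :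
    x ⬝ᵥ (A *ᵥ x) ≤ μ * (x ⬝ᵥ x) := by
  obtain ⟨y, hy1, hy2, _⟩ := aux_spectral A hA x
  rw [hy1, hy2, Finset.mul_sum]
  exact Finset.sum_le_sum fun i _ => mul_le_mul_of_nonneg_right (hmax i) (sq_nonneg _)

lemma aux_abs_eig {n : ℕ} (A : Matrix (Fin n) (Fin n) ℝ) (hA : A.IsHermitian)
    (hnn : ∀ i j, 0 ≤ A i j) (μ : ℝ) (hmax : ∀ i, hA.eigenvalues i ≤ μ) (i : Fin n) :
    |hA.eigenvalues i| ≤ μ := by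
  set v : Fin n → ℝ := ⇑(hA.eigenvectorBasis i) with hv
  have hnorm : ∑ j, (v j) ^ 2 = 1 := by
    have h := hA.eigenvectorBasis.orthonormal.1 i
    rw [EuclideanSpace.norm_eq] at h
    have h2 : ∑ j, ‖hA.eigenvectorBasis i j‖ ^ 2 = 1 := by
      have := congrArg (· ^ 2) h
      simpa [Real.sq_sqrt (Finset.sum_nonneg fun j _ => sq_nonneg _)] using this
    simpa [Real.norm_eq_abs, sq_abs] using h2
  have hev : A *ᵥ v = hA.eigenvalues i • v := hA.mulVec_eigenvectorBasis i
  have hquad : v ⬝ᵥ (A *ᵥ v) = hA.eigenvalues i := by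
    rw [hev, dotProduct_smul]
    simp only [smul_eq_mul]
    rw [show v ⬝ᵥ v = ∑ j, (v j) ^ 2 by simp [dotProduct, sq], hnorm, mul_one]
  set w : Fin n → ℝ := fun j => |v j| with hw
  have hwnorm : w ⬝ᵥ w = 1 := by
    rw [show w ⬝ᵥ w = ∑ j, (w j) ^ 2 by simp [dotProduct, sq]]
    simp only [hw, sq_abs]
    exact hnorm
  have habs : |v ⬝ᵥ (A *ᵥ v)| ≤ w ⬝ᵥ (A *ᵥ w) := by
    calc |v ⬝ᵥ (A *ᵥ v)| = |∑ j, ∑ k, v j * (A j k * v k)| := by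
          simp [dotProduct, mulVec, Finset.mul_sum]
      _ ≤ ∑ j, |∑ k, v j * (A j k * v k)| := Finset.abs_sum_le_sum_abs _ _
      _ ≤ ∑ j, ∑ k, |v j * (A j k * v k)| :=
          Finset.sum_le_sum fun j _ => Finset.abs_sum_le_sum_abs _ _
      _ = ∑ j, ∑ k, w j * (A j k * w k) := by
          refine Finset.sum_congr rfl fun j _ => Finset.sum_congr rfl fun k _ => ?_
          rw [abs_mul, abs_mul, abs_of_nonneg (hnn j k)]
      _ = w ⬝ᵥ (A *ᵥ w) := by simp [dotProduct, mulVec, Finset.mul_sum]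
  have hray := aux_rayleigh A hA μ hmax w
  rw [hwnorm, mul_one] at hray
  rw [hquad] at habs
  exact habs.trans hray

lemma aux_sq_bound {n : ℕ} (A : Matrix (Fin n) (Fin n) ℝ) (hA : A.IsHermitian)
    (hnn : ∀ i j, 0 ≤ A i j) (μ : ℝ) (hmax : ∀ i, hA.eigenvalues i ≤ μ) (x : Fin n → ℝ) :
    (A *ᵥ x) ⬝ᵥ (A *ᵥ x) ≤ μ ^ 2 * (x ⬝ᵥ x) := by
  obtain ⟨y, hy1, _, hy3⟩ := aux_spectral A hA x
  rw [hy1, hy3, Finset.mul_sum]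
  refine Finset.sum_le_sum fun i _ => mul_le_mul_of_nonneg_right ?_ (sq_nonneg _)
  have h := aux_abs_eig A hA hnn μ hmax i
  calc hA.eigenvalues i ^ 2 = |hA.eigenvalues i| ^ 2 := (sq_abs _).symm
    _ ≤ μ ^ 2 := pow_le_pow_left₀ (abs_nonneg _) h 2

lemma aux_sort_max {n : ℕ} (f : Fin n → ℝ) (hn : 0 < n) (i : Fin n) :
    f i ≤ f (Tuple.sort f (Fin.rev ⟨0, hn⟩)) := by
  have hmono := Tuple.monotone_sort f
  have hfi : f i = (f ∘ Tuple.sort f) ((Tuple.sort f)⁻¹ i) := by simp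
  rw [hfi]
  apply hmono
  have hrev : (Fin.rev (⟨0, hn⟩ : Fin n)).val = n - 1 := by simp [Fin.val_rev]
  rw [Fin.le_def, hrev]
  exact Nat.le_sub_one_of_lt ((Tuple.sort f)⁻¹ i).isLt

end AuxSpectral

noncomputable def graphEig {n : ℕ} (G : SimpleGraph (Fin n)) (i : Fin n) : ℝ :=
  letI := Classical.decRel G.Adj
  letI hH : (G.adjMatrix ℝ).IsHermitian := by rw [Matrix.IsHermitian, conjTranspose_eq_transpose_of_trivial]; exact G.isSymm_adjMatrix
  hH.eigenvalues (Tuple.sort hH.eigenvalues i.rev)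

set_option maxHeartbeats 1000000

theorem stmt6 (n : ℕ) (hn : 0 < n) (G : SimpleGraph (Fin n))
    (hm : 0 < G.edgeSet.ncard) :
    (∑ u : Fin n, |((G.neighborSet u).ncard : ℝ) - 2 * (G.edgeSet.ncard : ℝ) / n|) ^ 2 /
        (2 * (n : ℝ) ^ 2 * Real.sqrt (2 * (G.edgeSet.ncard : ℝ))) ≤
      graphEig G ⟨0, hn⟩ - 2 * (G.edgeSet.ncard : ℝ) / n := by
  letI : DecidableRel G.Adj := Classical.decRel G.Adj
  have hA : (G.adjMatrix ℝ).IsHermitian := by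
    rw [Matrix.IsHermitian, conjTranspose_eq_transpose_of_trivial]; exact G.isSymm_adjMatrix
  have hEig : graphEig G ⟨0, hn⟩
      = hA.eigenvalues (Tuple.sort hA.eigenvalues (Fin.rev ⟨0, hn⟩)) := rfl
  have hedge : G.edgeSet.ncard = G.edgeFinset.card := by
    rw [Set.ncard_eq_toFinset_card']
    exact congrArg Finset.card (by ext e; simp)
  have hnb : ∀ u, (G.neighborSet u).ncard = G.degree u := fun u => by
    rw [Set.ncard_eq_toFinset_card']; rfl
  rw [hedge] at hm ⊢
  simp only [hnb, hEig]
  set μ : ℝ := hA.eigenvalues (Tuple.sort hA.eigenvalues (Fin.rev ⟨0, hn⟩)) with hμ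
  have hmax : ∀ i, hA.eigenvalues i ≤ μ := fun i => aux_sort_max hA.eigenvalues hn i
  have hnn : ∀ i j, 0 ≤ G.adjMatrix ℝ i j := fun i j => by
    rw [SimpleGraph.adjMatrix_apply]; positivity
  set N : ℝ := (n : ℝ) with hN
  set M : ℝ := (G.edgeFinset.card : ℝ) with hM
  have hNpos : 0 < N := by rw [hN]; exact_mod_cast hn
  have hMpos : 0 < M := by rw [hM]; exact_mod_cast hm
  -- degree facts
  have hsumd : ∑ u : Fin n, (G.degree u : ℝ) = 2 * M := by
    rw [hM]
    exact_mod_cast G.sum_degrees_eq_twice_card_edges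
  have hd_le : ∀ u : Fin n, (G.degree u : ℝ) ≤ N := fun u => by
    have h := G.degree_lt_card_verts u
    rw [Fintype.card_fin] at h
    rw [hN]
    exact_mod_cast h.le
  have hd_nonneg : ∀ u : Fin n, (0:ℝ) ≤ (G.degree u : ℝ) := fun u => by positivity
  -- Rayleigh facts via all-ones vector
  have hone : (G.adjMatrix ℝ) *ᵥ (Function.const (Fin n) (1:ℝ)) = fun u => (G.degree u : ℝ) := by
    funext u
    rw [SimpleGraph.adjMatrix_mulVec_const_apply, mul_one]
  have hdot1 : (Function.const (Fin n) (1:ℝ)) ⬝ᵥ (Function.const (Fin n) (1:ℝ)) = N := by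
    rw [hN]
    simp [dotProduct, Function.const]
  have hquad1 : (Function.const (Fin n) (1:ℝ)) ⬝ᵥ ((G.adjMatrix ℝ) *ᵥ (Function.const (Fin n) (1:ℝ))) = 2 * M := by
    rw [hone]
    simpa [dotProduct] using hsumd
  have hquad2 : ((G.adjMatrix ℝ) *ᵥ (Function.const (Fin n) (1:ℝ))) ⬝ᵥ ((G.adjMatrix ℝ) *ᵥ (Function.const (Fin n) (1:ℝ)))
      = ∑ u : Fin n, (G.degree u : ℝ) ^ 2 := by
    rw [hone]
    simp [dotProduct, sq]
  have F1 : 2 * M ≤ μ * N := by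
    have h := aux_rayleigh (G.adjMatrix ℝ) hA μ hmax (Function.const (Fin n) (1:ℝ))
    rwa [hquad1, hdot1] at h
  have F2 : ∑ u : Fin n, (G.degree u : ℝ) ^ 2 ≤ μ ^ 2 * N := by
    have h := aux_sq_bound (G.adjMatrix ℝ) hA hnn μ hmax (Function.const (Fin n) (1:ℝ))
    rwa [hquad2, hdot1] at h
  have hμpos : 0 < μ := by nlinarith
  clear_value μ
  -- abbreviations
  set S2 : ℝ := ∑ u : Fin n, (G.degree u : ℝ) ^ 2 with hS2
  set a : ℝ := 2 * M / N with ha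
  set s : ℝ := ∑ u : Fin n, |(G.degree u : ℝ) - a| with hs
  clear_value N M
  have hapos : 0 < a := by rw [ha]; positivity
  have hS2nonneg : 0 ≤ S2 := Finset.sum_nonneg fun u _ => sq_nonneg _
  have hS2le : S2 ≤ 2 * M * N := by
    rw [hS2]
    calc ∑ u : Fin n, (G.degree u : ℝ) ^ 2 ≤ ∑ u : Fin n, N * (G.degree u : ℝ) :=
          Finset.sum_le_sum fun u _ => by nlinarith [hd_le u, hd_nonneg u]
      _ = N * (2 * M) := by rw [← Finset.mul_sum, hsumd]
      _ = 2 * M * N := by ring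
  have h2MN : 2 * M ≤ N ^ 2 := by
    have : 2 * M = ∑ u : Fin n, (G.degree u : ℝ) := hsumd.symm
    rw [this]
    calc ∑ u : Fin n, (G.degree u : ℝ) ≤ ∑ u : Fin n, N := Finset.sum_le_sum fun u _ => hd_le u
      _ = N * N := by simp [hN]
      _ = N ^ 2 := by ring
  have hCS1 : s ^ 2 ≤ N * ∑ u : Fin n, ((G.degree u : ℝ) - a) ^ 2 := by
    have h := sq_sum_le_card_mul_sum_sq (s := (Finset.univ : Finset (Fin n)))
      (f := fun u => |(G.degree u : ℝ) - a|)
    simpa [hs, sq_abs, Finset.card_univ, hN] using h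
  have hCS2 : (2 * M) ^ 2 ≤ N * S2 := by
    have h := sq_sum_le_card_mul_sum_sq (s := (Finset.univ : Finset (Fin n)))
      (f := fun u => (G.degree u : ℝ))
    rw [hsumd] at h
    simpa [Finset.card_univ, hN, hS2] using h
  have hvar : ∑ u : Fin n, ((G.degree u : ℝ) - a) ^ 2 = S2 - N * a ^ 2 := by
    have expand : ∑ u : Fin n, ((G.degree u : ℝ) - a) ^ 2
        = S2 - 2 * a * (2 * M) + N * a ^ 2 := by
      simp only [sub_sq]
      rw [Finset.sum_add_distrib, Finset.sum_sub_distrib, ← Finset.sum_mul, ← Finset.mul_sum,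
        hsumd]
      simp [hS2, hN, Finset.mul_sum]
      ring
    rw [expand, ha]
    field_simp
    ring
  -- Q
  clear_value S2 a s
  set Q : ℝ := Real.sqrt (S2 / N) with hQ
  have hQ2 : Q ^ 2 = S2 / N := Real.sq_sqrt (div_nonneg hS2nonneg hNpos.le)
  have hQnonneg : 0 ≤ Q := Real.sqrt_nonneg _
  have hQμ : Q ≤ μ := by
    have h : S2 / N ≤ μ ^ 2 := by rw [div_le_iff₀ hNpos]; linarith
    calc Q ≤ Real.sqrt (μ ^ 2) := Real.sqrt_le_sqrt h
      _ = μ := Real.sqrt_sq hμpos.le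
  have haQ : a ≤ Q := by
    have h1 : a ^ 2 ≤ S2 / N := by
      rw [ha]
      have h : (2 * M / N) ^ 2 = (2 * M) ^ 2 / N ^ 2 := by field_simp
      rw [h, div_le_div_iff₀ (by positivity) hNpos]
      nlinarith [hCS2, hNpos]
    calc a = Real.sqrt (a ^ 2) := (Real.sqrt_sq hapos.le).symm
      _ ≤ Q := Real.sqrt_le_sqrt h1
  have hQb : Q ≤ Real.sqrt (2 * M) := by
    rw [hQ]
    apply Real.sqrt_le_sqrt
    rw [div_le_iff₀ hNpos]
    linarith
  have hab : a ≤ Real.sqrt (2 * M) := by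
    have h1 : a ^ 2 ≤ 2 * M := by
      rw [ha, div_pow, div_le_iff₀ (by positivity)]
      nlinarith [hMpos, h2MN, hNpos]
    calc a = Real.sqrt (a ^ 2) := (Real.sqrt_sq hapos.le).symm
      _ ≤ Real.sqrt (2 * M) := Real.sqrt_le_sqrt h1
  clear_value Q
  have hQapos : 0 < Q + a := by linarith
  have hsqrtpos : 0 < Real.sqrt (2 * M) := by positivity
  -- final chain
  have hkey : s ^ 2 ≤ (Q - a) * (Q + a) * N ^ 2 := by
    have h : (Q - a) * (Q + a) = S2 / N - a ^ 2 := by ring_nf; rw [hQ2]; ring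
    rw [h]
    calc s ^ 2 ≤ N * (S2 - N * a ^ 2) := by rw [← hvar]; exact hCS1
      _ = (S2 / N - a ^ 2) * N ^ 2 := by field_simp
  calc s ^ 2 / (2 * N ^ 2 * Real.sqrt (2 * M))
      ≤ s ^ 2 / (N ^ 2 * (Q + a)) := by
        apply div_le_div_of_nonneg_left (sq_nonneg s) (by positivity)
        nlinarith [sq_nonneg N]
    _ ≤ Q - a := by
        rw [div_le_iff₀ (by positivity)]
        nlinarith [hkey]
    _ ≤ μ - a := by linarith
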